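/- Under the hypotheses of the failed-line-search setting: φ with L-Lipschitz gradient, |f−φ| ≤ ε_f everywhere, η ∈ (0,1/2], direction d satisfying gᵀd ≤ −σ_d‖g‖^{1+p} and ‖d‖ ≤ κ_d‖g‖^{(1+p)/2}, gradient-accuracy bound ‖g−∇φ(x)‖ ≤ σ·ᾱ_p·‖∇φ(x)‖^{(1+p)/2} with σ ∈ (0,1), and (1−σ)‖∇φ(x)‖ ≤ ‖g‖ ≤ (1+σ)‖∇φ(x)‖ with ‖∇φ(x)‖ > 0; then failure of the Armijo-type condition at step size α (i.e. η α gᵀd ≤ f(x+αd) − f(x) − 2ε_f) implies (1−η)σ_d(1−σ)^{1+p}‖∇φ(x)‖^{1+p} ≤ κ_d σ ᾱ_p (1+σ)^{(1+p)/2}‖∇φ(x)‖^{1+p} + (L κ_d²(1+σ)^{1+p}/2)·α·‖∇φ(x)‖^{1+p}. -/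

import Mathlib

open Real Set

lemma descent_lemma {E : Type*} [NormedAddCommGroup E] [InnerProductSpace ℝ E] [CompleteSpace E]
    (φ : E → ℝ) (hφ : Differentiable ℝ φ) {L : ℝ} (hL : 0 ≤ L)
    (hLip : LipschitzWith (Real.toNNReal L) (fun y => gradient φ y)) (x v : E) :
    φ (x + v) ≤ φ x + (inner ℝ (gradient φ x) v : ℝ) + L / 2 * ‖v‖ ^ 2 := by
  set F : ℝ → ℝ := fun t => φ (x + t • v) - t * (inner ℝ (gradient φ x) v : ℝ) with hF
  set F' : ℝ → ℝ := fun t => (inner ℝ (gradient φ (x + t • v) - gradient φ x) v : ℝ) with hF'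
  have hderiv : ∀ t : ℝ, HasDerivAt F (F' t) t := by
    intro t
    have hc : HasDerivAt (fun t : ℝ => x + t • v) v t := by
      simpa using ((hasDerivAt_id t).smul_const v).const_add x
    have hg : HasFDerivAt φ (InnerProductSpace.toDual ℝ E (gradient φ (x + t • v))) (x + t • v) :=
      (hφ (x + t • v)).hasGradientAt
    have h1 : HasDerivAt (fun t : ℝ => φ (x + t • v))
        ((inner ℝ (gradient φ (x + t • v)) v : ℝ)) t := by
      have h := hg.comp_hasDerivAt t hc
      simp at h ⊢
      exact h
    have h2 : HasDerivAt (fun t : ℝ => t * (inner ℝ (gradient φ x) v : ℝ))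
        ((inner ℝ (gradient φ x) v : ℝ)) t := by
      simpa using (hasDerivAt_id t).mul_const (inner ℝ (gradient φ x) v : ℝ)
    have h := h1.sub h2
    simp [hF, hF', inner_sub_left] at h ⊢
    exact h
  have hbound : ∀ t ∈ Ico (0:ℝ) 1, F' t ≤ L * ‖v‖ ^ 2 * t := by
    intro t ht
    have h1 : F' t ≤ ‖gradient φ (x + t • v) - gradient φ x‖ * ‖v‖ :=
      real_inner_le_norm _ _
    have h2 : ‖gradient φ (x + t • v) - gradient φ x‖ ≤ L * ‖t • v‖ := by
      have := hLip.dist_le_mul (x + t • v) x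
      simpa [dist_eq_norm, Real.coe_toNNReal L hL] using this
    have h3 : ‖t • v‖ = t * ‖v‖ := by
      rw [norm_smul, Real.norm_eq_abs, abs_of_nonneg ht.1]
    rw [h3] at h2
    nlinarith [norm_nonneg v, norm_nonneg (gradient φ (x + t • v) - gradient φ x), ht.1]
  have key : F 1 ≤ φ x + L * ‖v‖ ^ 2 / 2 * 1 ^ 2 := by
    have := image_le_of_deriv_right_le_deriv_boundary
      (f := F) (f' := F') (a := 0) (b := 1)
      (fun t _ => (hderiv t).continuousAt.continuousWithinAt)
      (fun t _ => (hderiv t).hasDerivWithinAt)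
      (B := fun t => φ x + L * ‖v‖ ^ 2 / 2 * t ^ 2) (B' := fun t => L * ‖v‖ ^ 2 * t)
      (by simp [hF]) ?_ ?_ ?_ (right_mem_Icc.2 zero_le_one)
    · exact this
    · fun_prop
    · intro t _
      have : HasDerivAt (fun t : ℝ => φ x + L * ‖v‖ ^ 2 / 2 * t ^ 2) (L * ‖v‖ ^ 2 * t) t := by
        have := ((hasDerivAt_pow 2 t).const_mul (L * ‖v‖ ^ 2 / 2)).const_add (φ x)
        convert this using 1
        · rfl
        · rfl
        · ring
      exact this.hasDerivWithinAt
    · exact hbound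
  simp only [hF, one_smul, one_mul, one_pow, mul_one] at key
  linarith

set_option maxHeartbeats 1000000 in
theorem stmt_4 (n : ℕ) (φ f : EuclideanSpace ℝ (Fin n) → ℝ)
    (x g d : EuclideanSpace ℝ (Fin n)) (L ε_f η σ_d κ_d p σ ᾱ_p α : ℝ)
    (hL : 0 < L) (hφ : Differentiable ℝ φ)
    (hLip : LipschitzWith (Real.toNNReal L) (fun y => gradient φ y))
    (hεf : 0 ≤ ε_f) (hf : ∀ y, |f y - φ y| ≤ ε_f)
    (hη0 : 0 < η) (hη1 : η ≤ 1 / 2)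
    (hσd0 : 0 < σ_d) (hσd1 : σ_d ≤ 1) (hκd : 1 ≤ κ_d) (hp : 0 ≤ p)
    (hσ0 : 0 < σ) (hσ1 : σ < 1) (hᾱp : 0 < ᾱ_p) (hα : 0 < α)
    (hd1 : (inner ℝ g d : ℝ) ≤ -σ_d * ‖g‖ ^ (1 + p))
    (hd2 : ‖d‖ ≤ κ_d * ‖g‖ ^ ((1 + p) / 2))
    (hacc : ‖g - gradient φ x‖ ≤ σ * ᾱ_p * ‖gradient φ x‖ ^ ((1 + p) / 2))
    (hlo : (1 - σ) * ‖gradient φ x‖ ≤ ‖g‖)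
    (hhi : ‖g‖ ≤ (1 + σ) * ‖gradient φ x‖)
    (hpos : 0 < ‖gradient φ x‖)
    (hfail : η * α * (inner ℝ g d : ℝ) ≤ f (x + α • d) - f x - 2 * ε_f) :
    (1 - η) * σ_d * (1 - σ) ^ (1 + p) * ‖gradient φ x‖ ^ (1 + p) ≤
      κ_d * σ * ᾱ_p * (1 + σ) ^ ((1 + p) / 2) * ‖gradient φ x‖ ^ (1 + p) +
        L * κ_d ^ 2 * (1 + σ) ^ (1 + p) / 2 * α * ‖gradient φ x‖ ^ (1 + p) := by
  set N := ‖gradient φ x‖ with hN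
  set G := ‖g‖ with hG
  have hGpos : 0 < G := lt_of_lt_of_le (mul_pos (by linarith) hpos) hlo
  have hq : (0:ℝ) ≤ 1 + p := by linarith
  -- failure plus noise bound gives increase bound on φ
  have hf1 := abs_le.1 (hf (x + α • d))
  have hf2 := abs_le.1 (hf x)
  have h0 : η * α * (inner ℝ g d : ℝ) ≤ φ (x + α • d) - φ x := by
    have := hf1.1; have := hf2.2; linarith
  -- descent lemma
  have hdesc := descent_lemma φ hφ hL.le hLip x (α • d)
  rw [real_inner_smul_right, norm_smul, Real.norm_eq_abs, abs_of_pos hα] at hdesc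
  -- gradient inner product bound
  have hinner : (inner ℝ (gradient φ x) d : ℝ) ≤
      (inner ℝ g d : ℝ) + ‖g - gradient φ x‖ * ‖d‖ := by
    have h1 : (inner ℝ (gradient φ x - g) d : ℝ) ≤ ‖gradient φ x - g‖ * ‖d‖ :=
      real_inner_le_norm _ _
    rw [inner_sub_left, norm_sub_rev] at h1
    linarith
  have key : (1 - η) * (-(inner ℝ g d : ℝ)) * α ≤
      (‖g - gradient φ x‖ * ‖d‖ + L * α * ‖d‖ ^ 2 / 2) * α := by
    nlinarith [mul_le_mul_of_nonneg_left hinner hα.le]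
  have key' : (1 - η) * (-(inner ℝ g d : ℝ)) ≤
      ‖g - gradient φ x‖ * ‖d‖ + L * α * ‖d‖ ^ 2 / 2 :=
    le_of_mul_le_mul_right key hα
  -- rpow facts
  have hGq_lo : (1 - σ) ^ (1 + p) * N ^ (1 + p) ≤ G ^ (1 + p) := by
    rw [← Real.mul_rpow (by linarith) (norm_nonneg _)]
    exact Real.rpow_le_rpow (mul_nonneg (by linarith) hpos.le) hlo hq
  have hGq_hi : G ^ (1 + p) ≤ (1 + σ) ^ (1 + p) * N ^ (1 + p) := by
    rw [← Real.mul_rpow (by linarith) (norm_nonneg _)]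
    exact Real.rpow_le_rpow (norm_nonneg _) hhi hq
  have hGh_hi : G ^ ((1 + p) / 2) ≤ (1 + σ) ^ ((1 + p) / 2) * N ^ ((1 + p) / 2) := by
    rw [← Real.mul_rpow (by linarith) (norm_nonneg _)]
    exact Real.rpow_le_rpow (norm_nonneg _) hhi (by linarith)
  have hNh2 : N ^ ((1 + p) / 2) * N ^ ((1 + p) / 2) = N ^ (1 + p) := by
    rw [← Real.rpow_add hpos]; norm_num
  have hGh2 : G ^ ((1 + p) / 2) * G ^ ((1 + p) / 2) = G ^ (1 + p) := by
    rw [← Real.rpow_add hGpos]; norm_num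
  have hNhpos : (0:ℝ) < N ^ ((1 + p) / 2) := Real.rpow_pos_of_pos hpos _
  have hGhpos : (0:ℝ) < G ^ ((1 + p) / 2) := Real.rpow_pos_of_pos hGpos _
  -- e1 : lower bound chain
  have e1 : (1 - η) * σ_d * ((1 - σ) ^ (1 + p) * N ^ (1 + p)) ≤
      (1 - η) * (-(inner ℝ g d : ℝ)) := by
    have h1 : σ_d * ((1 - σ) ^ (1 + p) * N ^ (1 + p)) ≤ σ_d * G ^ (1 + p) :=
      mul_le_mul_of_nonneg_left hGq_lo hσd0.le
    have h2 : σ_d * G ^ (1 + p) ≤ -(inner ℝ g d : ℝ) := by linarith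
    have h3 : (0:ℝ) ≤ 1 - η := by linarith
    have h4 := mul_le_mul_of_nonneg_left (h1.trans h2) h3
    linarith
  -- e2 : bound on error inner term
  have e2 : ‖g - gradient φ x‖ * ‖d‖ ≤
      κ_d * σ * ᾱ_p * (1 + σ) ^ ((1 + p) / 2) * N ^ (1 + p) := by
    calc ‖g - gradient φ x‖ * ‖d‖
        ≤ (σ * ᾱ_p * N ^ ((1 + p) / 2)) * (κ_d * G ^ ((1 + p) / 2)) :=
          mul_le_mul hacc hd2 (norm_nonneg d) (mul_nonneg (mul_pos hσ0 hᾱp).le hNhpos.le)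
      _ ≤ (σ * ᾱ_p * N ^ ((1 + p) / 2)) *
            (κ_d * ((1 + σ) ^ ((1 + p) / 2) * N ^ ((1 + p) / 2))) := by
          apply mul_le_mul_of_nonneg_left
            (mul_le_mul_of_nonneg_left hGh_hi (by linarith)) (mul_nonneg (mul_pos hσ0 hᾱp).le hNhpos.le)
      _ = κ_d * σ * ᾱ_p * (1 + σ) ^ ((1 + p) / 2) *
            (N ^ ((1 + p) / 2) * N ^ ((1 + p) / 2)) := by ring
      _ = κ_d * σ * ᾱ_p * (1 + σ) ^ ((1 + p) / 2) * N ^ (1 + p) := by rw [hNh2]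
  -- e3 : bound on squared step term
  have e3 : ‖d‖ ^ 2 ≤ κ_d ^ 2 * ((1 + σ) ^ (1 + p) * N ^ (1 + p)) := by
    calc ‖d‖ ^ 2 = ‖d‖ * ‖d‖ := sq ‖d‖
      _ ≤ (κ_d * G ^ ((1 + p) / 2)) * (κ_d * G ^ ((1 + p) / 2)) :=
          mul_self_le_mul_self (norm_nonneg d) hd2
      _ = κ_d ^ 2 * (G ^ ((1 + p) / 2) * G ^ ((1 + p) / 2)) := by ring
      _ = κ_d ^ 2 * G ^ (1 + p) := by rw [hGh2]
      _ ≤ κ_d ^ 2 * ((1 + σ) ^ (1 + p) * N ^ (1 + p)) :=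
          mul_le_mul_of_nonneg_left hGq_hi (by positivity)
  have e4 : L * α / 2 * ‖d‖ ^ 2 ≤
      L * α / 2 * (κ_d ^ 2 * ((1 + σ) ^ (1 + p) * N ^ (1 + p))) :=
    mul_le_mul_of_nonneg_left e3 (by positivity)
  linarith
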